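/- arXiv:2512.12600 — 3 statements merged into one kernel-verified Lean document; each statement's English description precedes it below -/
import Mathlib

section
/- Let q₁, …, q_m ∈ ℝⁿ be nonzero vectors and r₁, …, r_m ∈ ℝ satisfy r_i/|q_i| + r_j/|q_j| ≤ 0 for all i ≠ j. Define u_s = Σᵢ (q_i/|q_i|²)·min{−r_i, 0}. Then q_jᵀ u_s + r_j ≤ 0 for every j = 1, …, m. -/
theorem stmt2 {n m : ℕ} (hm : 1 ≤ m) (q : Fin m → EuclideanSpace ℝ (Fin n))
    (r : Fin m → ℝ) (hq : ∀ i, q i ≠ 0)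
    (hr : ∀ i j, i ≠ j → r i / ‖q i‖ + r j / ‖q j‖ ≤ 0) :
    ∀ j, (inner ℝ (q j) (∑ i, (min (-(r i)) 0 / ‖q i‖ ^ 2) • q i) : ℝ) + r j ≤ 0 := by
  intro j
  have hn : ∀ i, (0:ℝ) < ‖q i‖ := fun i => norm_pos_iff.mpr (hq i)
  have hsum : (inner ℝ (q j) (∑ i, (min (-(r i)) 0 / ‖q i‖ ^ 2) • q i) : ℝ)
      = ∑ i, (min (-(r i)) 0 / ‖q i‖ ^ 2) * (inner ℝ (q j) (q i) : ℝ) := by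
    rw [inner_sum]
    exact Finset.sum_congr rfl fun i _ => real_inner_smul_right _ _ _
  rw [hsum]
  set t : Fin m → ℝ := fun i => (min (-(r i)) 0 / ‖q i‖ ^ 2) * (inner ℝ (q j) (q i) : ℝ) with ht
  have hzero : ∀ i, r i ≤ 0 → t i = 0 := by
    intro i hi
    have h0 : min (-(r i)) 0 = 0 := min_eq_right (by linarith)
    simp [ht, h0]
  have hnegfromdiv : ∀ i, r i / ‖q i‖ < 0 → r i ≤ 0 := by
    intro i h
    by_contra hc
    push_neg at hc
    have := div_nonneg hc.le (hn i).le
    linarith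
  by_cases hrj : 0 < r j
  · -- all i ≠ j have r i ≤ 0, so only term j survives and it equals -(r j)
    have hall : ∀ i ∈ Finset.univ, i ≠ j → t i = 0 := by
      intro i _ hij
      apply hzero
      apply hnegfromdiv
      have h1 := hr i j hij
      have h2 : 0 < r j / ‖q j‖ := div_pos hrj (hn j)
      linarith
    rw [Finset.sum_eq_single j hall (fun h => absurd (Finset.mem_univ j) h)]
    have hmin : min (-(r j)) 0 = -(r j) := min_eq_left (by linarith)
    have hself : (inner ℝ (q j) (q j) : ℝ) = ‖q j‖ ^ 2 := real_inner_self_eq_norm_sq (q j)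
    have hne : (‖q j‖:ℝ) ^ 2 ≠ 0 := pow_ne_zero 2 (ne_of_gt (hn j))
    simp only [ht, hmin, hself]
    rw [div_mul_cancel₀ _ hne]
    linarith
  · push_neg at hrj
    by_cases hex : ∃ i, i ≠ j ∧ 0 < r i
    · obtain ⟨i₀, hij, hri⟩ := hex
      have hall : ∀ i ∈ Finset.univ, i ≠ i₀ → t i = 0 := by
        intro i _ hii
        by_cases hijj : i = j
        · subst hijj; exact hzero i hrj
        · apply hzero
          apply hnegfromdiv
          have h1 := hr i i₀ hii
          have h2 : 0 < r i₀ / ‖q i₀‖ := div_pos hri (hn i₀)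
          linarith
      rw [Finset.sum_eq_single i₀ hall (fun h => absurd (Finset.mem_univ i₀) h)]
      have hmin : min (-(r i₀)) 0 = -(r i₀) := min_eq_left (by linarith)
      have hip : -(‖q j‖ * ‖q i₀‖) ≤ (inner ℝ (q j) (q i₀) : ℝ) :=
        neg_le_of_abs_le (abs_real_inner_le_norm _ _)
      have key : r i₀ * ‖q j‖ + r j * ‖q i₀‖ ≤ 0 := by
        have h1 := hr i₀ j hij
        have h2 := hn i₀
        have h3 := hn j
        rw [div_add_div _ _ (ne_of_gt h2) (ne_of_gt h3), div_nonpos_iff] at h1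
        rcases h1 with ⟨ha, hb⟩ | ⟨ha, hb⟩
        · nlinarith
        · linarith
      simp only [ht, hmin]
      rw [div_mul_eq_mul_div, ← sub_nonpos, ← neg_neg (r j)]
      have hle : -(r i₀) * (inner ℝ (q j) (q i₀) : ℝ) / ‖q i₀‖ ^ 2 ≤ -(r j) := by
        rw [div_le_iff₀ (pow_pos (hn i₀) 2)]
        nlinarith [hn i₀, hn j, mul_le_mul_of_nonneg_left hip hri.le,
          mul_le_mul_of_nonneg_right key (hn i₀).le]
      linarith
    · push_neg at hex
      have hall : ∀ i ∈ Finset.univ, t i = 0 := by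
        intro i _
        by_cases hij : i = j
        · subst hij; exact hzero i hrj
        · exact hzero i (hex i hij)
      rw [Finset.sum_eq_zero hall]
      linarith
end

section
/- Suppose A_L ∈ ℝ^{m×n} has unit-norm rows and let c_A ∈ (0,1). Let A ∈ ℝⁿ be a unit vector such that there exist an index set I ⊆ {1,…,m} with |I| = n and a nonnegative vector k ∈ ℝⁿ satisfying kᵀ[A_L]_I = Aᵀ and [A_L]_I A ≥ c_A·𝟙 componentwise. Define [φ(b,A)]_i = c_A b + b·max([A_L A]_i − c_A, 0) + k_φ max(c_A − [A_L A]_i, 0) with b ≥ 0, k_φ > 0. If b' ∈ ℝ^m satisfies b' ≤ φ(b, A) componentwise, then {u : A_L(u − u_s) ≤ b'} ⊆ {u : Aᵀ(u − u_s) ≤ b}. -/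
open Matrix

theorem stmt7 {m n : ℕ} (A_L : Matrix (Fin m) (Fin n) ℝ)
    (hrows : ∀ i, A_L i ⬝ᵥ A_L i = 1)
    (c_A k_φ b : ℝ) (hcA : 0 < c_A) (hcA1 : c_A < 1) (hkφ : 0 < k_φ) (hb : 0 ≤ b)
    (A : Fin n → ℝ) (hA : A ⬝ᵥ A = 1) (u_s : Fin n → ℝ)
    (e : Fin n → Fin m) (he : Function.Injective e)
    (k : Fin n → ℝ) (hk : ∀ i, 0 ≤ k i)
    (hkA : ∀ j, ∑ i, k i * A_L (e i) j = A j)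
    (hgeq : ∀ i, c_A ≤ A_L.mulVec A (e i))
    (b' : Fin m → ℝ)
    (hb' : ∀ i, b' i ≤ c_A * b + b * max (A_L.mulVec A i - c_A) 0
        + k_φ * max (c_A - A_L.mulVec A i) 0) :
    {u : Fin n → ℝ | ∀ i, A_L.mulVec (u - u_s) i ≤ b' i} ⊆
      {u : Fin n → ℝ | A ⬝ᵥ (u - u_s) ≤ b} := by
  intro u hu
  simp only [Set.mem_setOf_eq] at hu ⊢
  have key : ∀ (v : Fin n → ℝ), A ⬝ᵥ v = ∑ i, k i * A_L.mulVec v (e i) := by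
    intro v
    simp only [dotProduct, mulVec, dotProduct]
    calc ∑ j, A j * v j = ∑ j, (∑ i, k i * A_L (e i) j) * v j := by
          simp [hkA]
      _ = ∑ j, ∑ i, k i * (A_L (e i) j * v j) := by
          congr 1; ext j; rw [Finset.sum_mul]; congr 1; ext i; ring
      _ = ∑ i, k i * ∑ j, A_L (e i) j * v j := by
          rw [Finset.sum_comm]; simp [Finset.mul_sum]
  have hbnd : ∀ i, b' (e i) ≤ b * A_L.mulVec A (e i) := by
    intro i
    have h := hb' (e i)
    have hge := hgeq i
    rw [max_eq_left (by linarith), max_eq_right (by linarith)] at h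
    linarith
  calc A ⬝ᵥ (u - u_s) = ∑ i, k i * A_L.mulVec (u - u_s) (e i) := key _
    _ ≤ ∑ i, k i * (b * A_L.mulVec A (e i)) := by
        apply Finset.sum_le_sum
        intro i _
        exact mul_le_mul_of_nonneg_left (le_trans (hu (e i)) (hbnd i)) (hk i)
    _ = b * ∑ i, k i * A_L.mulVec A (e i) := by
        rw [Finset.mul_sum]; congr 1; ext i; ring
    _ = b := by rw [← key A, hA, mul_one]
end

section
/- Let g_i : ℝⁿ → ℝ, i = 1,…,m, be differentiable convex functions. Then ⋂ᵢ {u : g_i(u) ≤ 0} = ⋂ᵢ ⋂_{ν ∈ ℝⁿ} {u : g_i(ν) + ∇g_i(ν)·(u − ν) ≤ 0}. -/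
open Set

/-- First-order condition for a convex differentiable function on an inner product space. -/
lemma grad_ineq {E : Type*} [NormedAddCommGroup E] [InnerProductSpace ℝ E] [CompleteSpace E]
    (f : E → ℝ) (hconv : ConvexOn ℝ Set.univ f) (hdiff : Differentiable ℝ f)
    (ν u : E) : f ν + (inner ℝ (gradient f ν) (u - ν) : ℝ) ≤ f u := by
  rcases eq_or_ne u ν with rfl | hne
  · simp
  · -- consider φ t = f (ν + t • (u - ν))
    set c : ℝ → E := fun t => ν + t • (u - ν) with hc
    have hφconv : ConvexOn ℝ Set.univ (f ∘ c) := by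
      have : ConvexOn ℝ ((fun t : ℝ => ν + t • (u - ν)) ⁻¹' Set.univ) (f ∘ c) := by
        exact hconv.comp_affineMap
          (AffineMap.const ℝ ℝ ν + LinearMap.toAffineMap (LinearMap.toSpanSingleton ℝ E (u - ν)))
      simpa using this
    have hcderiv : ∀ t : ℝ, HasDerivAt c (u - ν) t := by
      intro t
      have : HasDerivAt (fun t : ℝ => t • (u - ν)) (u - ν) t := by
        simpa using (hasDerivAt_id t).smul_const (u - ν)
      exact this.const_add ν
    have hfderiv : HasDerivAt (f ∘ c) ((inner ℝ (gradient f ν) (u - ν)) : ℝ) 0 := by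
      have hg : HasGradientAt f (gradient f ν) ν := (hdiff ν).hasGradientAt
      have hgf : HasFDerivAt f ((InnerProductSpace.toDual ℝ E) (gradient f ν)) ν :=
        hasGradientAt_iff_hasFDerivAt.mp hg
      have hc0 : c 0 = ν := by simp [hc]
      rw [← hc0] at hgf
      have := hgf.comp_hasDerivAt (0 : ℝ) (hcderiv 0)
      simpa [InnerProductSpace.toDual_apply_apply, hc0] using this
    have key : (inner ℝ (gradient f ν) (u - ν) : ℝ) ≤ slope (f ∘ c) 0 1 :=
      hφconv.le_slope_of_hasDerivAt (Set.mem_univ _) (Set.mem_univ _) one_pos hfderiv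
    have hs : slope (f ∘ c) 0 1 = f u - f ν := by
      simp [slope_def_field, hc, Function.comp]
    rw [hs] at key
    linarith

theorem stmt19 {n m : ℕ} (g : Fin m → EuclideanSpace ℝ (Fin n) → ℝ)
    (hconv : ∀ i, ConvexOn ℝ Set.univ (g i)) (hdiff : ∀ i, Differentiable ℝ (g i)) :
    (⋂ i, {u | g i u ≤ 0}) =
      ⋂ i, ⋂ ν : EuclideanSpace ℝ (Fin n),
        {u | g i ν + (inner ℝ (gradient (g i) ν) (u - ν) : ℝ) ≤ 0} := by
  ext u
  simp only [Set.mem_iInter, Set.mem_setOf_eq]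
  constructor
  · intro h i ν
    exact le_trans (grad_ineq (g i) (hconv i) (hdiff i) ν u) (h i)
  · intro h i
    have := h i u
    simpa using this
end
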